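/- Let 1 → K → G → Γ → 1 be a short exact sequence of finitely generated groups. Then there exists a nonzero group homomorphism φ : K → ℚ which extends to a group homomorphism G → ℚ if and only if b₁(G) > b₁(Γ), where b₁(H) is the rank of the abelianization of H. -/

import Mathlib

open TensorProduct

/-- `b₁(H)`: the rank of the abelianization of `H`, i.e. `dim_ℚ (H^ab ⊗ ℚ)`. -/
noncomputable def b1 (H : Type*) [Group H] : ℕ :=
  Module.finrank ℚ (ℚ ⊗[ℤ] Additive (Abelianization H))

namespace Stmt7Aux

/-- character groups correspond to duals of the rationalized abelianization. -/
noncomputable def homEquiv (H : Type*) [Group H] :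
    (H →* Multiplicative ℚ) ≃ Module.Dual ℚ (ℚ ⊗[ℤ] Additive (Abelianization H)) :=
  Abelianization.lift.trans <| MonoidHom.toAdditiveLeft.trans <|
    ((addMonoidHomLequivInt ℚ).toEquiv.trans (LinearMap.liftBaseChangeEquiv ℚ).toEquiv)

lemma homEquiv_tmul {H : Type*} [Group H] (f : H →* Multiplicative ℚ)
    (m : Additive (Abelianization H)) :
    homEquiv H f ((1 : ℚ) ⊗ₜ[ℤ] m) = (Abelianization.lift f m.toMul).toAdd := by
  simp [homEquiv, LinearMap.liftBaseChange_tmul]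

variable {G : Type*} [Group G] (K : Subgroup G) [K.Normal]

/-- the induced map on rationalized abelianizations. -/
noncomputable def pMap :
    (ℚ ⊗[ℤ] Additive (Abelianization G)) →ₗ[ℚ]
      (ℚ ⊗[ℤ] Additive (Abelianization (G ⧸ K))) :=
  LinearMap.baseChange ℚ
    (MonoidHom.toAdditive (Abelianization.map (QuotientGroup.mk' K))).toIntLinearMap

lemma pMap_surjective : Function.Surjective (pMap K) := by
  have h1 : Function.Surjective (Abelianization.map (QuotientGroup.mk' K)) := by
    intro y
    refine QuotientGroup.induction_on y fun q => ?_
    obtain ⟨g, rfl⟩ := QuotientGroup.mk'_surjective K q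
    exact ⟨Abelianization.of g, rfl⟩
  have h2 : Function.Surjective
      (MonoidHom.toAdditive (Abelianization.map (QuotientGroup.mk' K))).toIntLinearMap := h1
  have h3 := LinearMap.lTensor_surjective ℚ h2
  intro z
  obtain ⟨w, hw⟩ := h3 z
  exact ⟨w, hw⟩

lemma homEquiv_comp (χ : (G ⧸ K) →* Multiplicative ℚ) :
    homEquiv G (χ.comp (QuotientGroup.mk' K)) =
      (homEquiv (G ⧸ K) χ).comp (pMap K) := by
  have key : Abelianization.lift (χ.comp (QuotientGroup.mk' K)) =
      (Abelianization.lift χ).comp (Abelianization.map (QuotientGroup.mk' K)) := by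
    apply Abelianization.hom_ext
    ext g
    simp
  refine (LinearMap.liftBaseChangeEquiv (R := ℤ) ℚ).symm.injective
    (LinearMap.ext fun m => ?_)
  simp only [LinearMap.liftBaseChangeEquiv_symm_apply, LinearMap.coe_comp,
    Function.comp_apply]
  have hp : pMap K ((1 : ℚ) ⊗ₜ[ℤ] m) = (1 : ℚ) ⊗ₜ[ℤ]
      (MonoidHom.toAdditive (Abelianization.map (QuotientGroup.mk' K))) m := rfl
  rw [homEquiv_tmul, hp, homEquiv_tmul, key]
  rfl

lemma mem_range_iff (ψ : G →* Multiplicative ℚ) :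
    homEquiv G ψ ∈ LinearMap.range (pMap K).dualMap ↔ ∀ k : K, ψ (k : G) = 1 := by
  constructor
  · rintro ⟨Φ, hΦ⟩
    set χ := (homEquiv (G ⧸ K)).symm Φ with hχ
    have hΦ' : Φ = homEquiv (G ⧸ K) χ := by simp [hχ]
    have : homEquiv G ψ = homEquiv G (χ.comp (QuotientGroup.mk' K)) := by
      rw [homEquiv_comp, ← hΦ', ← hΦ]
      rfl
    have hψ : ψ = χ.comp (QuotientGroup.mk' K) := (homEquiv G).injective this
    intro k
    rw [hψ]
    simp only [MonoidHom.comp_apply]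
    rw [show QuotientGroup.mk' K (k : G) = 1 from (QuotientGroup.eq_one_iff _).2 k.2,
      map_one]
  · intro h
    set χ := QuotientGroup.lift K ψ (fun g hg => h ⟨g, hg⟩) with hχ
    have hψ : ψ = χ.comp (QuotientGroup.mk' K) := by ext g; rfl
    refine ⟨homEquiv (G ⧸ K) χ, ?_⟩
    rw [hψ, homEquiv_comp]
    rfl

end Stmt7Aux

open Stmt7Aux in
/-- for a short exact sequence `1 → K → G → Γ → 1` of finitely generated
groups (here `K ⊴ G` and `Γ = G/K`), there is a nonzero homomorphism `φ : K → ℚ`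
extending to a homomorphism `G → ℚ` if and only if `b₁(G) > b₁(Γ)`
(the "excessive homology" condition). -/
theorem stmt7 {G : Type*} [Group G] (K : Subgroup G) [K.Normal]
    (hG : Group.FG G) (hK : Group.FG K) (hQ : Group.FG (G ⧸ K)) :
    (∃ φ : K →* Multiplicative ℚ, φ ≠ 1 ∧
        ∃ ψ : G →* Multiplicative ℚ, ∀ k : K, ψ (k : G) = φ k) ↔
      b1 (G ⧸ K) < b1 G := by
  classical
  -- finite dimensionality
  have hfin : ∀ (H : Type _) [Group H], ∀ _ : Group.FG H,
      Module.Finite ℚ (ℚ ⊗[ℤ] Additive (Abelianization H)) := by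
    intro H _ hH
    haveI := hH
    haveI : Group.FG (Abelianization H) :=
      Group.fg_of_surjective (f := Abelianization.of)
        (fun y => QuotientGroup.induction_on y fun g => ⟨g, rfl⟩)
    haveI : AddGroup.FG (Additive (Abelianization H)) := GroupFG.iff_add_fg.mp ‹_›
    haveI : Module.Finite ℤ (Additive (Abelianization H)) :=
      Module.Finite.iff_addGroup_fg.mpr ‹_›
    infer_instance
  haveI hfG := hfin G hG
  haveI hfQ := hfin (G ⧸ K) hQ
  haveI : FiniteDimensional ℚ (ℚ ⊗[ℤ] Additive (Abelianization G)) := hfG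
  haveI : FiniteDimensional ℚ (ℚ ⊗[ℤ] Additive (Abelianization (G ⧸ K))) := hfQ
  have hinj : Function.Injective (pMap K).dualMap :=
    LinearMap.dualMap_injective_of_surjective (pMap_surjective K)
  have hrank : Module.finrank ℚ (LinearMap.range (pMap K).dualMap) = b1 (G ⧸ K) := by
    rw [LinearMap.finrank_range_of_inj hinj, Subspace.dual_finrank_eq]
    rfl
  -- first reduce existence to non-surjectivity of the dual restriction map
  have step1 : (∃ φ : K →* Multiplicative ℚ, φ ≠ 1 ∧
      ∃ ψ : G →* Multiplicative ℚ, ∀ k : K, ψ (k : G) = φ k) ↔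
      LinearMap.range (pMap K).dualMap ≠ ⊤ := by
    constructor
    · rintro ⟨φ, hφ, ψ, hψ⟩ htop
      have hmem : homEquiv G ψ ∈ LinearMap.range (pMap K).dualMap := htop ▸ trivial
      have h1 := (mem_range_iff K ψ).mp hmem
      exact hφ (MonoidHom.ext fun k => by rw [← hψ k, h1 k]; rfl)
    · intro hne
      have : ∃ Ψ : Module.Dual ℚ (ℚ ⊗[ℤ] Additive (Abelianization G)),
          Ψ ∉ LinearMap.range (pMap K).dualMap := by
        by_contra h
        push_neg at h
        exact hne (Submodule.eq_top_iff'.mpr h)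
      obtain ⟨Ψ, hΨ⟩ := this
      set ψ := (homEquiv G).symm Ψ with hψdef
      have hΨ' : homEquiv G ψ ∉ LinearMap.range (pMap K).dualMap := by
        rwa [hψdef, Equiv.apply_symm_apply]
      have hker : ¬ ∀ k : K, ψ (k : G) = 1 := fun h => hΨ' ((mem_range_iff K ψ).mpr h)
      push_neg at hker
      obtain ⟨k₀, hk₀⟩ := hker
      refine ⟨ψ.comp K.subtype, fun h => hk₀ ?_, ψ, fun k => rfl⟩
      have := DFunLike.congr_fun h k₀
      simpa using this
  rw [step1]
  constructor
  · intro hne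
    calc b1 (G ⧸ K) = Module.finrank ℚ (LinearMap.range (pMap K).dualMap) := hrank.symm
      _ < Module.finrank ℚ (Module.Dual ℚ (ℚ ⊗[ℤ] Additive (Abelianization G))) :=
          Submodule.finrank_lt hne
      _ = b1 G := Subspace.dual_finrank_eq
  · intro hlt htop
    have : b1 (G ⧸ K) = b1 G := by
      rw [← hrank, htop, finrank_top, Subspace.dual_finrank_eq]
      rfl
    omega
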